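/- Let I be a finite type with a distinguished element e, let n ≥ 1, and let f : Fin n → I be a function whose support S = { k : f(k) ≠ e } has cardinality m ≥ 1. Then ∑_{f' : Fin n → I} ( |{ σ ∈ Sym(Fin n) : f ∘ σ = f' }| / n! )² ≤ m/n. -/
import Mathlib


/-- The ℓ²-estimate from the proof of Lemma 2.2: for `f : Fin n → I` with support of
size `m ≥ 1`, the vector of normalized orbit counts has squared ℓ²-norm at most
`m / n`. -/
theorem stmt_6 (I : Type*) [Fintype I] (e : I) (n m : ℕ) (hn : 1 ≤ n) (hm : 1 ≤ m)
    (f : Fin n → I) (hsupp : {k : Fin n | f k ≠ e}.ncard = m) :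
    ∑ f' : Fin n → I,
      ((Nat.card {σ : Equiv.Perm (Fin n) // f ∘ σ = f'} : ℝ) /
        (Nat.factorial n : ℝ)) ^ 2 ≤ (m : ℝ) / (n : ℝ) := by
  classical
  obtain ⟨n', rfl⟩ : ∃ n', n = n' + 1 := ⟨n - 1, (Nat.succ_pred_eq_of_pos hn).symm⟩
  have hN : n' + 1 = n' + 1 := rfl
  -- support nonempty
  have hsupp' : Nat.card {k : Fin (n' + 1) // f k ≠ e} = m := by
    rw [← hsupp]; exact Nat.card_coe_set_eq _
  have hex : ∃ j : Fin (n' + 1), f j ≠ e := by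
    by_contra h
    push_neg at h
    have : ({k : Fin (n' + 1) | f k ≠ e} : Set (Fin (n' + 1))) = ∅ := by
      ext k; simp [h k]
    rw [this] at hsupp
    simp at hsupp; omega
  -- key cardinality bound
  have key : ∀ f' : Fin (n' + 1) → I,
      Nat.card {σ : Equiv.Perm (Fin (n' + 1)) // f ∘ σ = f'} * (n' + 1) ≤ m * Nat.factorial (n' + 1) := by
    intro f'
    by_cases h : ∃ σ : Equiv.Perm (Fin (n' + 1)), f ∘ σ = f'
    · obtain ⟨σ₀, hσ₀⟩ := h
      obtain ⟨j, hj⟩ := hex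
      set k₀ : Fin (n' + 1) := σ₀.symm j with hk₀
      have hk : f' k₀ ≠ e := by
        rw [← hσ₀]
        simpa [hk₀] using hj
      set c : Equiv.Perm (Fin (n' + 1)) := Equiv.swap (0 : Fin (n' + 1)) k₀
      -- injection
      have hinj : Function.Injective (fun σ : {σ : Equiv.Perm (Fin (n' + 1)) // f ∘ σ = f'} =>
          ((⟨σ.1 k₀, by
              have := congrFun σ.2 k₀
              simp only [Function.comp_apply] at this
              rw [this]; exact hk⟩ : {i : Fin (n' + 1) // f i ≠ e}),
            (Equiv.Perm.decomposeFin (σ.1 * c)).2)) := by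
        intro σ τ hst
        simp only [Prod.mk.injEq, Subtype.mk.injEq] at hst
        have h1 : (σ.1 * c) 0 = (τ.1 * c) 0 := by
          simp only [Equiv.Perm.mul_apply]
          have : c 0 = k₀ := Equiv.swap_apply_left _ _
          rw [this]; exact hst.1
        have h2 : Equiv.Perm.decomposeFin (σ.1 * c) = Equiv.Perm.decomposeFin (τ.1 * c) := by
          apply Prod.ext
          · have hfst : ∀ π : Equiv.Perm (Fin (n' + 1)), (Equiv.Perm.decomposeFin π).1 = π 0 := by
              intro π
              have := Equiv.Perm.decomposeFin.symm_apply_apply π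
              conv_rhs => rw [← this]
              rw [Equiv.Perm.decomposeFin_symm_apply_zero]
            rw [hfst, hfst]; exact h1
          · exact hst.2
        have h3 : σ.1 * c = τ.1 * c := Equiv.Perm.decomposeFin.injective h2
        ext1
        exact mul_right_cancel h3
      have hcard : Nat.card {σ : Equiv.Perm (Fin (n' + 1)) // f ∘ σ = f'} ≤
          m * Nat.factorial n' := by
        calc Nat.card {σ : Equiv.Perm (Fin (n' + 1)) // f ∘ σ = f'}
            ≤ Nat.card ({i : Fin (n' + 1) // f i ≠ e} × Equiv.Perm (Fin n')) :=
              Nat.card_le_card_of_injective _ hinj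
          _ = m * Nat.factorial n' := by
              rw [Nat.card_prod, hsupp', Nat.card_eq_fintype_card, Fintype.card_perm,
                Fintype.card_fin]
      calc Nat.card {σ : Equiv.Perm (Fin (n' + 1)) // f ∘ σ = f'} * (n' + 1)
          ≤ m * Nat.factorial n' * (n' + 1) := Nat.mul_le_mul_right _ hcard
        _ = m * Nat.factorial (n' + 1) := by
            show m * Nat.factorial n' * (n' + 1) = m * Nat.factorial (n' + 1)
            rw [Nat.factorial_succ]; ring
    · have : IsEmpty {σ : Equiv.Perm (Fin (n' + 1)) // f ∘ σ = f'} := by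
        constructor; rintro ⟨σ, hσ⟩; exact h ⟨σ, hσ⟩
      rw [Nat.card_of_isEmpty]
      simp
  -- total count
  have hsum : ∑ f' : Fin (n' + 1) → I, (Nat.card {σ : Equiv.Perm (Fin (n' + 1)) // f ∘ σ = f'} : ℝ)
      = (Nat.factorial (n' + 1) : ℝ) := by
    have : ∑ f' : Fin (n' + 1) → I, Nat.card {σ : Equiv.Perm (Fin (n' + 1)) // f ∘ σ = f'}
        = Nat.factorial (n' + 1) := by
      simp_rw [Nat.card_eq_fintype_card]
      rw [← Fintype.card_sigma,
        Fintype.card_congr (Equiv.sigmaFiberEquiv (fun σ : Equiv.Perm (Fin (n' + 1)) => f ∘ σ)),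
        Fintype.card_perm, Fintype.card_fin]
    exact_mod_cast congrArg (Nat.cast : ℕ → ℝ) this
  have hNpos : (0 : ℝ) < (n' + 1) := by positivity
  have hfacpos : (0 : ℝ) < Nat.factorial (n' + 1) := by positivity
  push_cast
  calc ∑ f' : Fin (n' + 1) → I,
        ((Nat.card {σ : Equiv.Perm (Fin (n' + 1)) // f ∘ σ = f'} : ℝ) / (Nat.factorial (n' + 1) : ℝ)) ^ 2
      ≤ ∑ f' : Fin (n' + 1) → I, ((m : ℝ) / (n' + 1)) *
          ((Nat.card {σ : Equiv.Perm (Fin (n' + 1)) // f ∘ σ = f'} : ℝ) / (Nat.factorial (n' + 1) : ℝ)) := by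
        apply Finset.sum_le_sum
        intro f' _
        set x : ℝ := (Nat.card {σ : Equiv.Perm (Fin (n' + 1)) // f ∘ σ = f'} : ℝ) / (Nat.factorial (n' + 1) : ℝ)
        have hx0 : 0 ≤ x := by positivity
        have hxb : x ≤ (m : ℝ) / (n' + 1) := by
          rw [div_le_div_iff₀ hfacpos hNpos]
          exact_mod_cast key f'
        calc x ^ 2 = x * x := sq x
          _ ≤ ((m : ℝ) / (n' + 1)) * x := mul_le_mul_of_nonneg_right hxb hx0
    _ = (m : ℝ) / (n' + 1) := by
        rw [← Finset.mul_sum, ← Finset.sum_div, hsum, div_self (ne_of_gt hfacpos), mul_one]
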